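/- Every RNFAwtl A can be effectively converted into an equivalent RNFAwtl C such that C never enters an infinite computation and C accepts only after reading and deleting its input completely; if A is deterministic, then C is deterministic. -/

import Mathlib

/-- A nondeterministic finite automaton with translucent letters (NFAwtl). -/
structure NFAwtl (Q α : Type) where
  τ : Q → Set α
  I : Set Q
  F : Set Q
  δ : Q → α → Set Q
  tr : ∀ q a, a ∈ τ q → δ q a = ∅

namespace NFAwtl

variable {Q α : Type}

/-- One computation step of an NFAwtl: delete the leftmost non-translucent letter
and change state (the head returns to the left end). -/
def Step (A : NFAwtl Q α) : Q × List α → Q × List α → Prop := fun c c' =>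
  ∃ u a v, c.2 = u ++ a :: v ∧ (∀ x ∈ u, x ∈ A.τ c.1) ∧ a ∉ A.τ c.1 ∧
    c'.1 ∈ A.δ c.1 a ∧ c'.2 = u ++ v

/-- Acceptance: from some initial state, reach a configuration whose remaining
letters are all translucent for a final state. -/
def Accepts (A : NFAwtl Q α) (w : List α) : Prop :=
  ∃ q₀ ∈ A.I, ∃ q w', Relation.ReflTransGen A.Step (q₀, w) (q, w') ∧
    (∀ x ∈ w', x ∈ A.τ q) ∧ q ∈ A.F

def lang (A : NFAwtl Q α) : Set (List α) := { w | A.Accepts w }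

/-- A DFAwtl: single initial state and at most one transition per state/letter. -/
def Deterministic (A : NFAwtl Q α) : Prop :=
  (∃ q₀, A.I = {q₀}) ∧ ∀ q a, (A.δ q a).Subsingleton

end NFAwtl

/-- A repetitive NFAwtl (RNFAwtl): on the end-of-tape marker it may accept
(states in `Facc`) or change state via `δend` and continue. -/
structure RNFAwtl (Q α : Type) where
  τ : Q → Set α
  I : Set Q
  δ : Q → α → Set Q
  δend : Q → Set Q
  Facc : Set Q
  tr : ∀ q a, a ∈ τ q → δ q a = ∅
  accEnd : ∀ q, q ∈ Facc → δend q = ∅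

namespace RNFAwtl

variable {Q α : Type}

/-- One computation step of an RNFAwtl: either delete the leftmost
non-translucent letter, or, when all remaining letters are translucent,
change state via a `◁`-transition and continue. -/
def Step (A : RNFAwtl Q α) : Q × List α → Q × List α → Prop := fun c c' =>
  (∃ u a v, c.2 = u ++ a :: v ∧ (∀ x ∈ u, x ∈ A.τ c.1) ∧ a ∉ A.τ c.1 ∧
    c'.1 ∈ A.δ c.1 a ∧ c'.2 = u ++ v)
  ∨ ((∀ x ∈ c.2, x ∈ A.τ c.1) ∧ c'.1 ∈ A.δend c.1 ∧ c'.2 = c.2)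

def Accepts (A : RNFAwtl Q α) (w : List α) : Prop :=
  ∃ q₀ ∈ A.I, ∃ q w', Relation.ReflTransGen A.Step (q₀, w) (q, w') ∧
    (∀ x ∈ w', x ∈ A.τ q) ∧ q ∈ A.Facc

def lang (A : RNFAwtl Q α) : Set (List α) := { w | A.Accepts w }

/-- An RDFAwtl: single initial state and deterministic transitions. -/
def Deterministic (A : RNFAwtl Q α) : Prop :=
  (∃ q₀, A.I = {q₀}) ∧ (∀ q a, (A.δ q a).Subsingleton) ∧ ∀ q, (A.δend q).Subsingleton

end RNFAwtl

/-- A non-returning repetitive NFAwtl (nr-NFAwtl): the head continues from the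
position of the last deleted letter; on the end-of-tape marker it may change
state and return the head to the left end. -/
structure NrNFAwtl (Q α : Type) where
  τ : Q → Set α
  I : Set Q
  δ : Q → α → Set Q
  δend : Q → Set Q
  Facc : Set Q
  tr : ∀ q a, a ∈ τ q → δ q a = ∅
  accEnd : ∀ q, q ∈ Facc → δend q = ∅

namespace NrNFAwtl

variable {Q α : Type}

/-- Configurations are `(x, q, w)`: `x` is the already-skipped prefix, the head
is on the first letter of `w`. -/
def Step (A : NrNFAwtl Q α) :
    List α × Q × List α → List α × Q × List α → Prop := fun c c' =>
  (∃ u a v, c.2.2 = u ++ a :: v ∧ (∀ x ∈ u, x ∈ A.τ c.2.1) ∧ a ∉ A.τ c.2.1 ∧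
    c'.2.1 ∈ A.δ c.2.1 a ∧ c'.1 = c.1 ++ u ∧ c'.2.2 = v)
  ∨ ((∀ x ∈ c.2.2, x ∈ A.τ c.2.1) ∧ c'.2.1 ∈ A.δend c.2.1 ∧ c'.1 = [] ∧
    c'.2.2 = c.1 ++ c.2.2)

def Accepts (A : NrNFAwtl Q α) (w : List α) : Prop :=
  ∃ q₀ ∈ A.I, ∃ x q w', Relation.ReflTransGen A.Step ([], q₀, w) (x, q, w') ∧
    (∀ y ∈ w', y ∈ A.τ q) ∧ q ∈ A.Facc

def lang (A : NrNFAwtl Q α) : Set (List α) := { w | A.Accepts w }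

def Deterministic (A : NrNFAwtl Q α) : Prop :=
  (∃ q₀, A.I = {q₀}) ∧ (∀ q a, (A.δ q a).Subsingleton) ∧ ∀ q, (A.δend q).Subsingleton

end NrNFAwtl

/-- A non-repetitive non-returning NFAwtl (nr-nr-NFAwtl): non-returning, and it
must halt as soon as all remaining letters to the right are translucent. -/
structure NrnrNFAwtl (Q α : Type) where
  τ : Q → Set α
  I : Set Q
  F : Set Q
  δ : Q → α → Set Q
  tr : ∀ q a, a ∈ τ q → δ q a = ∅

namespace NrnrNFAwtl

variable {Q α : Type}

def Step (A : NrnrNFAwtl Q α) :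
    List α × Q × List α → List α × Q × List α → Prop := fun c c' =>
  ∃ u a v, c.2.2 = u ++ a :: v ∧ (∀ x ∈ u, x ∈ A.τ c.2.1) ∧ a ∉ A.τ c.2.1 ∧
    c'.2.1 ∈ A.δ c.2.1 a ∧ c'.1 = c.1 ++ u ∧ c'.2.2 = v

def Accepts (A : NrnrNFAwtl Q α) (w : List α) : Prop :=
  ∃ q₀ ∈ A.I, ∃ x q w', Relation.ReflTransGen A.Step ([], q₀, w) (x, q, w') ∧
    (∀ y ∈ w', y ∈ A.τ q) ∧ q ∈ A.F

def lang (A : NrnrNFAwtl Q α) : Set (List α) := { w | A.Accepts w }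

def Deterministic (A : NrnrNFAwtl Q α) : Prop :=
  (∃ q₀, A.I = {q₀}) ∧ ∀ q a, (A.δ q a).Subsingleton

end NrnrNFAwtl

/-- Language classes. -/
def NFAwtlLangs (α : Type) [Fintype α] : Set (Set (List α)) :=
  { L | ∃ (Q : Type) (_ : Fintype Q) (A : NFAwtl Q α), A.lang = L }

def DFAwtlLangs (α : Type) [Fintype α] : Set (Set (List α)) :=
  { L | ∃ (Q : Type) (_ : Fintype Q) (A : NFAwtl Q α), A.Deterministic ∧ A.lang = L }

def RNFAwtlLangs (α : Type) [Fintype α] : Set (Set (List α)) :=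
  { L | ∃ (Q : Type) (_ : Fintype Q) (A : RNFAwtl Q α), A.lang = L }

def RDFAwtlLangs (α : Type) [Fintype α] : Set (Set (List α)) :=
  { L | ∃ (Q : Type) (_ : Fintype Q) (A : RNFAwtl Q α), A.Deterministic ∧ A.lang = L }

def NrNFAwtlLangs (α : Type) [Fintype α] : Set (Set (List α)) :=
  { L | ∃ (Q : Type) (_ : Fintype Q) (A : NrNFAwtl Q α), A.lang = L }

def NrDFAwtlLangs (α : Type) [Fintype α] : Set (Set (List α)) :=
  { L | ∃ (Q : Type) (_ : Fintype Q) (A : NrNFAwtl Q α), A.Deterministic ∧ A.lang = L }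

def NrnrNFAwtlLangs (α : Type) [Fintype α] : Set (Set (List α)) :=
  { L | ∃ (Q : Type) (_ : Fintype Q) (A : NrnrNFAwtl Q α), A.lang = L }

def NrnrDFAwtlLangs (α : Type) [Fintype α] : Set (Set (List α)) :=
  { L | ∃ (Q : Type) (_ : Fintype Q) (A : NrnrNFAwtl Q α), A.Deterministic ∧ A.lang = L }

/-- The three-letter alphabet {a, b, c}. -/
inductive Al : Type
  | a | b | c
deriving DecidableEq

instance : Fintype Al := ⟨{Al.a, Al.b, Al.c}, fun x => by cases x <;> simp⟩

section NormAux

open Relation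

variable {Q α : Type}

/-- The normalized RNFAwtl: states record the set of states in which the
end-of-tape marker was already reached since the last deletion, plus a sink. -/
def RNFAwtl.norm [DecidableEq Q] (A : RNFAwtl Q α) :
    RNFAwtl ((Q × Finset Q) ⊕ Unit) α where
  τ := fun q' => match q' with
    | .inl (q, _) => A.τ q
    | .inr _ => ∅
  I := {x | ∃ q ∈ A.I, x = .inl (q, ∅)}
  δ := fun q' a => match q' with
    | .inl (q, _) => {x | ∃ q₁ ∈ A.δ q a, x = .inl (q₁, ∅)}
    | .inr _ => {.inr ()}
  δend := fun q' => match q' with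
    | .inl (q, S) => {x | q ∉ S ∧ ((q ∈ A.Facc ∧ x = .inr ()) ∨
        (∃ q₁ ∈ A.δend q, x = .inl (q₁, insert q S)))}
    | .inr _ => ∅
  Facc := {.inr ()}
  tr := by
    rintro (⟨q, S⟩ | u) a ha
    · have := A.tr q a ha
      ext x
      simp only [Set.mem_setOf_eq, this, Set.mem_empty_iff_false, false_and,
        exists_const, exists_false]
    · exact absurd ha (Set.notMem_empty a)
  accEnd := by
    rintro (⟨q, S⟩ | u) hq
    · exact absurd hq (by simp [Set.mem_singleton_iff])
    · rfl

/-- The sink state deletes all remaining letters. -/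
theorem RNFAwtl.norm_sink_clears [DecidableEq Q] (A : RNFAwtl Q α) (w : List α) :
    ReflTransGen A.norm.Step (.inr (), w) (.inr (), []) := by
  induction w with
  | nil => exact .refl
  | cons a w ih =>
    refine .head ?_ ih
    exact Or.inl ⟨[], a, w, rfl, by simp, Set.notMem_empty a, rfl, rfl⟩

/-- Forward simulation: every computation of `A` can be mimicked by `A.norm`,
recording a set `V` of states reached at the marker with the current tape. -/
theorem RNFAwtl.norm_sim [DecidableEq Q] (A : RNFAwtl Q α) {p : Q} {w : List α}
    {c : Q × List α} (h : ReflTransGen A.Step (p, w) c) :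
    ∃ V : Finset Q, c.1 ∈ V ∧ ∀ s ∈ V, ∃ T ⊆ V, s ∉ T ∧
      ReflTransGen A.norm.Step (.inl (p, ∅), w) (.inl (s, T), c.2) := by
  induction h with
  | refl =>
    refine ⟨{p}, Finset.mem_singleton_self p, fun s hs => ?_⟩
    rw [Finset.mem_singleton] at hs
    subst hs
    exact ⟨∅, Finset.empty_subset _, Finset.notMem_empty _, .refl⟩
  | @tail b c h₁ h₂ ih =>
    obtain ⟨r, w₂⟩ := b
    obtain ⟨V₂, hrV, hall⟩ := ih
    rcases h₂ with ⟨u, a, v, hsplit, hu, ha, hδ, hc2⟩ | ⟨htr, hδe, hc2⟩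
    · -- deletion step
      obtain ⟨T, _, _, hpath⟩ := hall r hrV
      refine ⟨{c.1}, Finset.mem_singleton_self _, fun s hs => ?_⟩
      rw [Finset.mem_singleton] at hs
      subst hs
      refine ⟨∅, Finset.empty_subset _, Finset.notMem_empty _, hpath.tail ?_⟩
      exact Or.inl ⟨u, a, v, hsplit, hu, ha, ⟨c.1, hδ, rfl⟩, hc2⟩
    · -- end-marker step
      simp only at hδe htr hc2
      by_cases hqV : c.1 ∈ V₂
      · refine ⟨V₂, hqV, fun s hs => ?_⟩
        obtain ⟨T, hTV, hsT, hpath⟩ := hall s hs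
        exact ⟨T, hTV, hsT, hc2 ▸ hpath⟩
      · refine ⟨insert c.1 V₂, Finset.mem_insert_self _ _, fun s hs => ?_⟩
        rcases Finset.mem_insert.1 hs with hs | hs
        · subst hs
          obtain ⟨T, hTV, hrT, hpath⟩ := hall r hrV
          refine ⟨insert r T, ?_, ?_, ?_⟩
          · exact Finset.insert_subset (Finset.mem_insert_of_mem hrV)
              (hTV.trans (Finset.subset_insert _ _))
          · intro hmem
            rcases Finset.mem_insert.1 hmem with h | h
            · exact hqV (h ▸ hrV)
            · exact hqV (hTV h)
          · refine hpath.tail ?_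
            refine Or.inr ⟨htr, ⟨hrT, Or.inr ⟨c.1, hδe, rfl⟩⟩, hc2⟩
        · obtain ⟨T, hTV, hsT, hpath⟩ := hall s hs
          exact ⟨T, hTV.trans (Finset.subset_insert _ _), hsT, hc2 ▸ hpath⟩

/-- Backward simulation: a computation of `A.norm` staying in the main states
projects to a computation of `A`; reaching the sink certifies acceptance of `A`. -/
theorem RNFAwtl.norm_back [DecidableEq Q] (A : RNFAwtl Q α) {p : Q} {S : Finset Q}
    {w : List α} {c : ((Q × Finset Q) ⊕ Unit) × List α}
    (h : ReflTransGen A.norm.Step (.inl (p, S), w) c) :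
    (∃ q' S', c.1 = .inl (q', S') ∧ ReflTransGen A.Step (p, w) (q', c.2)) ∨
    (∃ q'' w'', ReflTransGen A.Step (p, w) (q'', w'') ∧
      (∀ x ∈ w'', x ∈ A.τ q'') ∧ q'' ∈ A.Facc) := by
  induction h with
  | refl => exact Or.inl ⟨p, S, rfl, .refl⟩
  | @tail b c h₁ h₂ ih =>
    rcases ih with ⟨q₂, S₂, hb1, hA⟩ | hacc
    · obtain ⟨b1, w₂⟩ := b
      simp only at hb1
      subst hb1
      rcases h₂ with ⟨u, a, v, hsplit, hu, ha, hδ, hc2⟩ | ⟨htr, hδe, hc2⟩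
      · obtain ⟨q₁, hq₁, hx⟩ := hδ
        refine Or.inl ⟨q₁, ∅, hx, hA.tail ?_⟩
        exact Or.inl ⟨u, a, v, hsplit, hu, ha, hq₁, hc2⟩
      · simp only at htr hδe hc2
        obtain ⟨-, hδe⟩ := hδe
        rcases hδe with ⟨hF, _⟩ | ⟨q₁, hq₁, hx⟩
        · exact Or.inr ⟨q₂, w₂, hA, htr, hF⟩
        · refine Or.inl ⟨q₁, insert q₂ S₂, hx, ?_⟩
          rw [hc2]
          exact hA.tail (Or.inr ⟨htr, hq₁, rfl⟩)
    · exact Or.inr hacc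

/-- The languages coincide. -/
theorem RNFAwtl.norm_lang [DecidableEq Q] (A : RNFAwtl Q α) :
    A.norm.lang = A.lang := by
  ext w
  constructor
  · rintro ⟨q₀', hq₀', q', w', hpath, htr, hF⟩
    obtain ⟨q₀, hq₀, rfl⟩ := hq₀'
    rcases A.norm_back (c := (q', w')) hpath with ⟨qq, SS, hq', hA⟩ | ⟨q'', w'', hA, htr'', hF''⟩
    · exfalso
      have : q' = .inr () := hF
      simp only at hq'
      rw [this] at hq'
      exact absurd hq' (by simp)
    · exact ⟨q₀, hq₀, q'', w'', hA, htr'', hF''⟩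
  · rintro ⟨q₀, hq₀, q, w', hpath, htr, hF⟩
    obtain ⟨V, hqV, hall⟩ := A.norm_sim (c := (q, w')) hpath
    obtain ⟨T, _, hqT, hp⟩ := hall q hqV
    refine ⟨.inl (q₀, ∅), ⟨q₀, hq₀, rfl⟩, .inr (), [], ?_, by simp, rfl⟩
    refine ReflTransGen.trans (hp.tail ?_) (A.norm_sink_clears w')
    exact Or.inr ⟨htr, ⟨hqT, Or.inl ⟨hF, rfl⟩⟩, rfl⟩

/-- A strictly decreasing measure for computations of the normalized machine. -/
def RNFAwtl.normMeasure [Fintype Q] (c : ((Q × Finset Q) ⊕ Unit) × List α) : ℕ :=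
  c.2.length * (Fintype.card Q + 1) + (match c.1 with
    | .inl (_, S) => Fintype.card Q - S.card
    | .inr _ => 0)

theorem RNFAwtl.norm_step_measure [DecidableEq Q] [Fintype Q] (A : RNFAwtl Q α)
    {c c' : ((Q × Finset Q) ⊕ Unit) × List α} (h : A.norm.Step c c') :
    RNFAwtl.normMeasure c' < RNFAwtl.normMeasure c := by
  obtain ⟨c1, w⟩ := c
  obtain ⟨c1', w'⟩ := c'
  have hm : ∀ (x : (Q × Finset Q) ⊕ Unit) (v : List α),
      RNFAwtl.normMeasure (x, v) ≤ v.length * (Fintype.card Q + 1) + Fintype.card Q ∧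
      v.length * (Fintype.card Q + 1) ≤ RNFAwtl.normMeasure (x, v) := by
    rintro (⟨_, S⟩ | u) v
    · exact ⟨Nat.add_le_add_left (Nat.sub_le _ _) _, Nat.le_add_right _ _⟩
    · exact ⟨Nat.le_add_right _ _, Nat.le_add_right _ _⟩
  rcases h with ⟨u, a, v, hsplit, hu, ha, hδ, hc2⟩ | ⟨htr, hδe, hc2⟩
  · -- deletion step: the tape gets strictly shorter
    simp only at hsplit hc2
    subst hsplit; subst hc2
    have h1 := (hm c1' (u ++ v)).1
    have h2 := (hm c1 (u ++ a :: v)).2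
    have h3 : (u ++ a :: v).length * (Fintype.card Q + 1) =
        (u ++ v).length * (Fintype.card Q + 1) + (Fintype.card Q + 1) := by
      simp only [List.length_append, List.length_cons]
      ring
    omega
  · -- end-marker step: the recorded set strictly grows (or we enter the sink)
    simp only at htr hδe hc2
    have minl : ∀ (q : Q) (S : Finset Q) (v : List α),
        RNFAwtl.normMeasure (Sum.inl (q, S), v)
          = v.length * (Fintype.card Q + 1) + (Fintype.card Q - S.card) :=
      fun _ _ _ => rfl
    have minr : ∀ (v : List α),
        RNFAwtl.normMeasure ((Sum.inr () : (Q × Finset Q) ⊕ Unit), v)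
          = v.length * (Fintype.card Q + 1) + 0 := fun _ => rfl
    rcases c1 with ⟨q, S⟩ | u
    · obtain ⟨hqS, hδe⟩ := hδe
      have hcard : S.card < Fintype.card Q := by
        have : S ⊂ Finset.univ :=
          Finset.ssubset_univ_iff.mpr (fun h => hqS (h ▸ Finset.mem_univ q))
        simpa using Finset.card_lt_card this
      rcases hδe with ⟨hF, hx⟩ | ⟨q₁, hq₁, hx⟩
      · subst hx
        rw [minr, minl, hc2]
        omega
      · subst hx
        rw [minl, minl, hc2, Finset.card_insert_of_notMem hqS]
        omega
    · exact absurd hδe (Set.notMem_empty _)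

end NormAux

/-- every RNFAwtl can be converted into an equivalent RNFAwtl `C`
that admits no infinite computation and accepts only after reading and deleting
its input completely; determinism is preserved. -/
theorem RNFAwtl_normalization (α : Type) [Fintype α] (Q : Type) [Fintype Q]
    (A : RNFAwtl Q α) :
    ∃ (Q' : Type) (_ : Fintype Q') (C : RNFAwtl Q' α),
      C.lang = A.lang ∧
      (∀ f : ℕ → Q' × List α, ¬ ∀ n, C.Step (f n) (f (n + 1))) ∧
      (∀ (w : List α), ∀ q₀ ∈ C.I, ∀ (q : Q') (w' : List α),
        Relation.ReflTransGen C.Step (q₀, w) (q, w') →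
        (∀ x ∈ w', x ∈ C.τ q) → q ∈ C.Facc → w' = []) ∧
      (A.Deterministic → C.Deterministic) := by
  letI := Classical.decEq Q
  refine ⟨(Q × Finset Q) ⊕ Unit, inferInstance, A.norm, A.norm_lang, ?_, ?_, ?_⟩
  · -- no infinite computation
    intro f hf
    have key : ∀ n, RNFAwtl.normMeasure (f n) + n ≤ RNFAwtl.normMeasure (f 0) := by
      intro n
      induction n with
      | zero => simp
      | succ n ih =>
        have := A.norm_step_measure (hf n)
        omega
    have := key (RNFAwtl.normMeasure (f 0) + 1)
    omega
  · -- acceptance only with empty tape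
    intro w q₀ hq₀ q w' hpath htr hF
    have hq : q = .inr () := hF
    subst hq
    cases w' with
    | nil => rfl
    | cons a w' => exact absurd (htr a (by simp)) (Set.notMem_empty a)
  · -- determinism is preserved
    rintro ⟨⟨q₀, hI⟩, hδ, hδe⟩
    refine ⟨⟨.inl (q₀, ∅), ?_⟩, ?_, ?_⟩
    · ext x
      simp only [RNFAwtl.norm, hI, Set.mem_setOf_eq, Set.mem_singleton_iff,
        exists_eq_left]
    · rintro (⟨q, S⟩ | u) a x hx y hy
      · obtain ⟨q₁, hq₁, rfl⟩ := hx
        obtain ⟨q₂, hq₂, rfl⟩ := hy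
        rw [hδ q a hq₁ hq₂]
      · cases u
        have hx' : x = Sum.inr () := hx
        have hy' : y = Sum.inr () := hy
        rw [hx', hy']
    · rintro (⟨q, S⟩ | u) x hx y hy
      · obtain ⟨hqS, hx⟩ := hx
        obtain ⟨-, hy⟩ := hy
        rcases hx with ⟨hF, rfl⟩ | ⟨q₁, hq₁, rfl⟩
        · rcases hy with ⟨-, rfl⟩ | ⟨q₂, hq₂, rfl⟩
          · rfl
          · exact absurd hq₂ (by rw [A.accEnd q hF]; exact Set.notMem_empty _)
        · rcases hy with ⟨hF, rfl⟩ | ⟨q₂, hq₂, rfl⟩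
          · exact absurd hq₁ (by rw [A.accEnd q hF]; exact Set.notMem_empty _)
          · rw [hδe q hq₁ hq₂]
      · exact absurd hx (Set.notMem_empty _)
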